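/- arXiv:2508.10499 — 2 statements merged into one kernel-verified Lean document; each statement's English description precedes it below -/
import Mathlib

section
/- Work in the exterior algebra Λ = ⋀(V) over 𝔽₂ = ℤ/2 on basis t₁, t₂, t₃, t₄, with τ the algebra automorphism induced by t₁ ↦ t₃, t₂ ↦ t₄, t₃ ↦ t₁, t₄ ↦ t₂. Then for every element x of the degree-2 homogeneous component ⋀²V that is fixed by τ, one has (t₁∧t₂ + t₃∧t₄) ∧ x ≠ t₁∧t₂∧t₃∧t₄. (Indeed the left-hand side is always 0 while t₁∧t₂∧t₃∧t₄ ≠ 0.) -/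
open ExteriorAlgebra

/-- The involution of `Fin 4` swapping `0 ↔ 2` and `1 ↔ 3`. -/
def swapPerm4 : Equiv.Perm (Fin 4) := (Equiv.swap 0 2).trans (Equiv.swap 1 3)

/-- The linear involution of `𝔽₂⁴` with `t₁ ↦ t₃, t₂ ↦ t₄, t₃ ↦ t₁, t₄ ↦ t₂`
on the standard basis. -/
def swapLin4 : (Fin 4 → ZMod 2) →ₗ[ZMod 2] (Fin 4 → ZMod 2) :=
  LinearMap.funLeft (ZMod 2) (ZMod 2) swapPerm4

/-- The algebra automorphism `τ` of `⋀(𝔽₂⁴)` induced by the linear involution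
`t₁ ↦ t₃, t₂ ↦ t₄, t₃ ↦ t₁, t₄ ↦ t₂`. -/
def tau4 : ExteriorAlgebra (ZMod 2) (Fin 4 → ZMod 2) →ₐ[ZMod 2]
    ExteriorAlgebra (ZMod 2) (Fin 4 → ZMod 2) :=
  ExteriorAlgebra.map swapLin4

/-- The standard basis elements `t₁, t₂, t₃, t₄` of `𝔽₂⁴` inside the exterior algebra
(indexed here by `0, 1, 2, 3`). -/
noncomputable def t4 (i : Fin 4) : ExteriorAlgebra (ZMod 2) (Fin 4 → ZMod 2) :=
  ι (ZMod 2) (Pi.single i 1)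

noncomputable def detF : ∀ i : ℕ, (Fin 4 → ZMod 2) [⋀^Fin i]→ₗ[ZMod 2] (ZMod 2)
  | 4 => Matrix.detRowAlternating
  | _ => 0

noncomputable def phi4 : ExteriorAlgebra (ZMod 2) (Fin 4 → ZMod 2) →ₗ[ZMod 2] ZMod 2 :=
  liftAlternating detF

lemma swapLin4_single (i : Fin 4) : swapLin4 (Pi.single i 1) = Pi.single (swapPerm4 i) 1 := by
  ext j
  fin_cases i <;> fin_cases j <;>
    simp [swapLin4, swapPerm4, LinearMap.funLeft, Pi.single_apply, Equiv.swap_apply_def]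

lemma tau4_t4 (i : Fin 4) : tau4 (t4 i) = t4 (swapPerm4 i) := by
  rw [tau4, t4, map_apply_ι, swapLin4_single, t4]

lemma sign_swapPerm4 : Equiv.Perm.sign swapPerm4 = 1 := by
  have : swapPerm4 = Equiv.swap (1 : Fin 4) 3 * Equiv.swap 0 2 := rfl
  rw [this, map_mul, Equiv.Perm.sign_swap (by decide), Equiv.Perm.sign_swap (by decide)]
  decide

lemma phi4_comp_tau4 : phi4 ∘ₗ tau4.toLinearMap = phi4 := by
  ext i v
  simp only [LinearMap.compAlternatingMap_apply, LinearMap.comp_apply, AlgHom.toLinearMap_apply,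
    tau4, ExteriorAlgebra.map_apply_ιMulti, phi4, liftAlternating_apply_ιMulti]
  match i with
  | 0 => rfl
  | 1 => rfl
  | 2 => rfl
  | 3 => rfl
  | 4 =>
      show Matrix.detRowAlternating (swapLin4 ∘ v) = Matrix.detRowAlternating v
      have h1 : Matrix.of (swapLin4 ∘ v) = (Matrix.of v).submatrix id swapPerm4 := by
        ext k j; rfl
      show ((Matrix.of (swapLin4 ∘ v)).det : ZMod 2) = (Matrix.of v).det
      rw [h1, Matrix.det_permute', sign_swapPerm4]
      simp
  | (n+5) => rfl

lemma phi4_top : phi4 (t4 0 * t4 1 * t4 2 * t4 3) = 1 := by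
  have h : t4 0 * t4 1 * t4 2 * t4 3 = ιMulti (ZMod 2) 4 (fun i => Pi.single i 1) := by
    simp only [ιMulti_apply, t4, List.ofFn_succ, List.prod_cons, List.ofFn_zero, List.prod_nil,
      mul_one, mul_assoc]
    rfl
  rw [h, phi4, liftAlternating_apply_ιMulti]
  show ((Matrix.of fun i : Fin 4 => (Pi.single i 1 : Fin 4 → ZMod 2)).det : ZMod 2) = 1
  have : (Matrix.of fun i : Fin 4 => (Pi.single i 1 : Fin 4 → ZMod 2)) = 1 := by
    ext i j
    simp [Matrix.one_apply, Pi.single_apply, eq_comm]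
  rw [this, Matrix.det_one]

/-- In `Λ = ⋀(𝔽₂⁴)` with `τ` induced by `t₁ ↦ t₃, t₂ ↦ t₄, t₃ ↦ t₁, t₄ ↦ t₂`: for every
element `x` of the degree-2 component `⋀²(𝔽₂⁴)` fixed by `τ`, one has
`(t₁∧t₂ + t₃∧t₄) ∧ x ≠ t₁∧t₂∧t₃∧t₄`. -/
theorem stmt7 :
    ∀ x : ExteriorAlgebra (ZMod 2) (Fin 4 → ZMod 2),
      x ∈ ⋀[ZMod 2]^2 (Fin 4 → ZMod 2) → tau4 x = x →
        (t4 0 * t4 1 + t4 2 * t4 3) * x ≠ t4 0 * t4 1 * t4 2 * t4 3 := by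
  intro x _ hfix heq
  have hφτ : ∀ y, phi4 (tau4 y) = phi4 y := fun y =>
    congrFun (congrArg (fun f => f.toFun) phi4_comp_tau4) y
  have h34 : phi4 (t4 2 * t4 3 * x) = phi4 (t4 0 * t4 1 * x) := by
    have : tau4 (t4 0 * t4 1 * x) = t4 2 * t4 3 * x := by
      rw [map_mul, map_mul, tau4_t4, tau4_t4, hfix]
      rfl
    rw [← this, hφτ]
  have hL : phi4 ((t4 0 * t4 1 + t4 2 * t4 3) * x) = 0 := by
    rw [add_mul, map_add, h34]
    exact CharTwo.add_self_eq_zero _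
  rw [heq, phi4_top] at hL
  exact one_ne_zero hL
end

section
/- Let C₂ be the cyclic group of order 2 acting on ℤ⁴ via the automorphism s sending (a₁, a₂, a₃, a₄) to (a₃, a₄, a₁, a₂), let π = ℤ⁴ ⋊ C₂ be the corresponding semidirect product, and let j : ℤ⁴ → π be the inclusion of the normal subgroup. Consider group cohomology with trivial coefficients 𝔽₂ = ℤ/2. Then the image of the restriction map j* : H²(π; 𝔽₂) → H²(ℤ⁴; 𝔽₂) is exactly the subgroup of classes x ∈ H²(ℤ⁴; 𝔽₂) fixed by the automorphism s* of H²(ℤ⁴; 𝔽₂) induced functorially by s. -/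
open groupCohomology

noncomputable section

universe u

section Functoriality

variable {k G H : Type u} [CommRing k] [Group G] [Group H]

/-- The 2-coboundaries as a submodule of the 2-cocycles (the old Mathlib `twoCoboundaries`). -/
def twoCoboundaries (A : Rep k G) : Submodule k (cocycles₂ A) :=
  LinearMap.range ((d₁₂ A).hom.codRestrict (cocycles₂ A) fun c => d₁₂_apply_mem_cocycles₂ c)

/-- The old Mathlib `H2 A := twoCocycles A ⧸ twoCoboundaries A`. -/
abbrev H2Quot (A : Rep k G) := cocycles₂ A ⧸ twoCoboundaries A

/-- Pullback of inhomogeneous 2-cochains with trivial coefficients along a group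
homomorphism `f : G →* H`, sending a cochain `c : H × H → k` to `c ∘ (f × f)`. -/
def twoCochainsPullback (f : G →* H) : (H × H → k) →ₗ[k] (G × G → k) :=
  LinearMap.funLeft k k (Prod.map f f)

lemma twoCochainsPullback_mem_twoCocycles (f : G →* H) {c : H × H → k}
    (hc : c ∈ cocycles₂ (Rep.trivial k H k)) :
    twoCochainsPullback (k := k) f c ∈ cocycles₂ (Rep.trivial k G k) := by
  rw [mem_cocycles₂_iff] at hc ⊢
  intro g h j
  have := hc (f g) (f h) (f j)
  simpa only [twoCochainsPullback, LinearMap.funLeft_apply, Prod.map_apply, map_mul,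
    Representation.isTrivial_apply] using this

/-- Pullback of 2-cocycles of the trivial representation along a group homomorphism. -/
def twoCocyclesPullback (f : G →* H) :
    cocycles₂ (Rep.trivial k H k) →ₗ[k] cocycles₂ (Rep.trivial k G k) :=
  (twoCochainsPullback (k := k) f).restrict fun _ hc =>
    twoCochainsPullback_mem_twoCocycles f hc

lemma twoCocyclesPullback_coboundaries_le (f : G →* H) :
    twoCoboundaries (Rep.trivial k H k) ≤
      (twoCoboundaries (Rep.trivial k G k)).comap (twoCocyclesPullback (k := k) f) := by
  rintro ⟨c, hc⟩ ⟨φ, hφ⟩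
  refine ⟨φ ∘ f, ?_⟩
  apply Subtype.ext
  have hφ' : (d₁₂ (Rep.trivial k H k)).hom φ = c := congrArg Subtype.val hφ
  show (d₁₂ (Rep.trivial k G k)).hom (φ ∘ f) = twoCochainsPullback (k := k) f c
  funext g
  have := congrFun hφ' (Prod.map f f g)
  simp only [d₁₂_hom_apply, Representation.isTrivial_apply, Prod.map_fst, Prod.map_snd, Function.comp_apply,
    map_mul] at this ⊢
  simpa only [twoCochainsPullback, LinearMap.funLeft_apply, Function.comp_apply,
    Prod.map_fst, Prod.map_snd] using this

/-- The map `H²(H; k) → H²(G; k)` on degree-2 group cohomology with trivial coefficients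
induced functorially by a group homomorphism `f : G →* H`. -/
def H2TrivPullback (f : G →* H) :
    H2Quot (Rep.trivial k H k) →ₗ[k] H2Quot (Rep.trivial k G k) :=
  Submodule.mapQ _ _ (twoCocyclesPullback (k := k) f)
    (twoCocyclesPullback_coboundaries_le f)

end Functoriality

section Example

/-- The group `ℤ⁴`, written multiplicatively. -/
abbrev Z4 : Type := Multiplicative (Fin 4 → ℤ)

/-- The automorphism `s` of `ℤ⁴` sending `(a₁, a₂, a₃, a₄)` to `(a₃, a₄, a₁, a₂)`. -/
def sAut : MulAut Z4 where
  toFun v := Multiplicative.ofAdd (Multiplicative.toAdd v ∘ swapPerm4)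
  invFun v := Multiplicative.ofAdd (Multiplicative.toAdd v ∘ swapPerm4)
  left_inv v := by
    have hσ : ∀ i : Fin 4, swapPerm4 (swapPerm4 i) = i := by decide
    show Multiplicative.ofAdd ((Multiplicative.toAdd v ∘ swapPerm4) ∘ swapPerm4) = v
    have h : (Multiplicative.toAdd v ∘ swapPerm4) ∘ swapPerm4 = Multiplicative.toAdd v :=
      funext fun i => congrArg (Multiplicative.toAdd v) (hσ i)
    rw [h]
    rfl
  right_inv v := by
    have hσ : ∀ i : Fin 4, swapPerm4 (swapPerm4 i) = i := by decide
    show Multiplicative.ofAdd ((Multiplicative.toAdd v ∘ swapPerm4) ∘ swapPerm4) = v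
    have h : (Multiplicative.toAdd v ∘ swapPerm4) ∘ swapPerm4 = Multiplicative.toAdd v :=
      funext fun i => congrArg (Multiplicative.toAdd v) (hσ i)
    rw [h]
    rfl
  map_mul' _ _ := rfl

lemma sAut_sq : sAut * sAut = 1 := by
  ext v : 1
  show sAut (sAut v) = v
  exact sAut.left_inv v

/-- The cyclic group of order 2, written multiplicatively. -/
abbrev C₂ : Type := Multiplicative (ZMod 2)

/-- The action of `C₂` on `ℤ⁴` in which the nontrivial element acts by
`(a₁, a₂, a₃, a₄) ↦ (a₃, a₄, a₁, a₂)`. -/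
def actC₂ : C₂ →* MulAut Z4 where
  toFun x := if x = 1 then 1 else sAut
  map_one' := if_pos rfl
  map_mul' := by
    have hcases : ∀ z : C₂, z = 1 ∨ z = Multiplicative.ofAdd (1 : ZMod 2) := by decide
    have hmul : Multiplicative.ofAdd (1 : ZMod 2) * Multiplicative.ofAdd (1 : ZMod 2) = 1 := by
      decide
    have hne : Multiplicative.ofAdd (1 : ZMod 2) ≠ 1 := by decide
    intro x y
    rcases hcases x with hx | hx <;> rcases hcases y with hy | hy <;> subst hx <;> subst hy <;>
      simp [hne, hmul, sAut_sq]

/-- The semidirect product `π = ℤ⁴ ⋊ C₂`. -/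
abbrev Pi4 : Type := Z4 ⋊[actC₂] C₂

lemma mem_twoCoboundaries_iff {k G : Type u} [CommRing k] [Group G] {A : Rep k G}
    (f : cocycles₂ A) :
    f ∈ twoCoboundaries A ↔ ∃ g : G → A, ∀ a b : G,
      A.ρ a (g b) - g (a * b) + g a = (f : G × G → A) (a, b) := by
  constructor
  · rintro ⟨g, hg⟩
    refine ⟨g, fun a b => ?_⟩
    have : (d₁₂ A).hom g (a, b) = (f : G × G → A) (a, b) := congrFun (congrArg Subtype.val hg) (a, b)
    simpa [d₁₂_hom_apply] using this
  · rintro ⟨g, hg⟩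
    refine ⟨g, Subtype.ext (funext fun p => ?_)⟩
    show (d₁₂ A).hom g p = (f : G × G → A) p
    simpa [d₁₂_hom_apply] using hg p.1 p.2

section Test
open SemidirectProduct

lemma z2_two : (2 : ZMod 2) = 0 := by decide

def tauC : C₂ := Multiplicative.ofAdd (1 : ZMod 2)

lemma C2_cases (a : C₂) : a = 1 ∨ a = tauC :=
  (by decide : ∀ a : C₂, a = 1 ∨ a = tauC) a

def eC : C₂ → ZMod 2 := fun a => Multiplicative.toAdd a

lemma eC_one : eC 1 = 0 := rfl
lemma eC_tau : eC tauC = 1 := rfl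
lemma eC_mul (a b : C₂) : eC (a * b) = eC a + eC b := rfl

lemma actC₂_one : actC₂ (1 : C₂) = 1 := map_one actC₂

lemma actC₂_tau : actC₂ tauC = sAut := by
  have : (tauC : C₂) ≠ 1 := by decide
  simp [actC₂, this]

lemma sAut_sAut (u : Z4) : sAut (sAut u) = u := sAut.left_inv u

lemma tcp_apply {G H : Type} [Group G] [Group H] (f : G →* H)
    (c : cocycles₂ (Rep.trivial (ZMod 2) H (ZMod 2))) (p : G × G) :
    (twoCocyclesPullback (k := ZMod 2) f c : G × G → ZMod 2) p
      = (c : H × H → ZMod 2) (f p.1, f p.2) := rfl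

end Test
section Test2
open SemidirectProduct

lemma conj_coboundary {π : Type} [Group π] (t : π)
    (c : cocycles₂ (Rep.trivial (ZMod 2) π (ZMod 2))) :
    ∃ ψ : π → ZMod 2, ∀ x y : π,
      ψ y - ψ (x * y) + ψ x
        = (c : π × π → ZMod 2) (t * x * t⁻¹, t * y * t⁻¹)
          - (c : π × π → ZMod 2) (x, y) := by
  have hc := (mem_cocycles₂_iff (c : π × π → ZMod 2)).1 c.2
  simp only [Representation.isTrivial_apply] at hc
  refine ⟨fun z => (c : π × π → ZMod 2) (t * z * t⁻¹, t) + (c : π × π → ZMod 2) (t, z),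
    fun x y => ?_⟩
  have h1 := hc t x y
  have h2 := hc (t * x * t⁻¹) t y
  have h3 := hc (t * x * t⁻¹) (t * y * t⁻¹) t
  have e1 : t * x * t⁻¹ * t = t * x := by group
  have e2 : t * x * t⁻¹ * (t * y * t⁻¹) = t * (x * y) * t⁻¹ := by group
  have e3 : t * y * t⁻¹ * t = t * y := by group
  rw [e1] at h2
  rw [e2, e3] at h3
  linear_combination h1 - h2 - h3 +
    ((c : π × π → ZMod 2) (x, y) + (c : π × π → ZMod 2) (t * x * t⁻¹, t)
      - (c : π × π → ZMod 2) (t * x * t⁻¹, t * y)) * z2_two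

end Test2
section Test3
open SemidirectProduct

lemma inr_conj_inl (u : Z4) :
    (inr tauC : Pi4) * inl u * (inr tauC)⁻¹ = inl (sAut u) := by
  rw [← map_inv, ← inl_aut, actC₂_tau]

lemma range_subset_fixed (c' : cocycles₂ (Rep.trivial (ZMod 2) Pi4 (ZMod 2))) :
    twoCocyclesPullback (k := ZMod 2) sAut.toMonoidHom
        (twoCocyclesPullback (k := ZMod 2) (inl : Z4 →* Pi4) c')
      - twoCocyclesPullback (k := ZMod 2) (inl : Z4 →* Pi4) c'
      ∈ twoCoboundaries (Rep.trivial (ZMod 2) Z4 (ZMod 2)) := by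
  obtain ⟨ψ, hψ⟩ := conj_coboundary (inr tauC : Pi4) c'
  rw [mem_twoCoboundaries_iff]
  refine ⟨fun u => ψ (inl u), fun g h => ?_⟩
  have key := hψ (inl g) (inl h)
  rw [inr_conj_inl, inr_conj_inl, ← map_mul] at key
  simp only [Representation.isTrivial_apply]
  exact key

end Test3
section Test4
open SemidirectProduct

/-- Projection of `ℤ⁴` onto its first two coordinates. -/
def projZ4 : Z4 → Z4 := fun u =>
  Multiplicative.ofAdd (fun i => if (i : Fin 4).val < 2 then Multiplicative.toAdd u i else 0)

lemma projZ4_mul (u v : Z4) : projZ4 (u * v) = projZ4 u * projZ4 v := by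
  show Multiplicative.ofAdd _ = Multiplicative.ofAdd _
  congr 1
  funext i
  show (if i.val < 2 then Multiplicative.toAdd u i + Multiplicative.toAdd v i else 0)
      = (if i.val < 2 then Multiplicative.toAdd u i else 0)
        + (if i.val < 2 then Multiplicative.toAdd v i else 0)
  split_ifs <;> simp

lemma proj_decomp (u : Z4) : projZ4 u * sAut (projZ4 (sAut u)) = u := by
  have hσ : ∀ i : Fin 4, swapPerm4 (swapPerm4 i) = i := by decide
  have hv : ∀ i : Fin 4, ((swapPerm4 i).val < 2 ↔ ¬ (i.val < 2)) := by decide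
  apply Multiplicative.toAdd.injective
  funext i
  show (if i.val < 2 then Multiplicative.toAdd u i else 0)
      + (if (swapPerm4 i).val < 2 then Multiplicative.toAdd u (swapPerm4 (swapPerm4 i)) else 0)
      = Multiplicative.toAdd u i
  rw [hσ i]
  by_cases hi : i.val < 2
  · rw [if_pos hi, if_neg (by simpa using (hv i).not.2 (by simpa using hi)), add_zero]
  · rw [if_neg hi, if_pos ((hv i).2 hi), zero_add]

end Test4
section Test5
open SemidirectProduct

/-- The underlying function of a 2-cocycle, valued in `ZMod 2`. -/
def cVal {G : Type} [Group G] (c : cocycles₂ (Rep.trivial (ZMod 2) G (ZMod 2))) :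
    G × G → ZMod 2 := fun p => c p

lemma exists_phi (c : cocycles₂ (Rep.trivial (ZMod 2) Z4 (ZMod 2)))
    (hcb : twoCocyclesPullback (k := ZMod 2) sAut.toMonoidHom c - c
      ∈ twoCoboundaries (Rep.trivial (ZMod 2) Z4 (ZMod 2))) :
    ∃ φ : Z4 → ZMod 2,
      (∀ u v : Z4, φ v - φ (u * v) + φ u = cVal c (sAut u, sAut v) - cVal c (u, v)) ∧
      (∀ u : Z4, φ (sAut u) = φ u) := by
  rw [mem_twoCoboundaries_iff] at hcb
  obtain ⟨φprev, h₀⟩ := hcb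
  simp only [Representation.isTrivial_apply] at h₀
  set φ₀ : Z4 → ZMod 2 := fun u => φprev u with hφ₀
  have h₀' : ∀ g h : Z4, φ₀ h - φ₀ (g * h) + φ₀ g = cVal c (sAut g, sAut h) - cVal c (g, h) :=
    fun g h => h₀ g h
  refine ⟨fun u => φ₀ u + φ₀ (projZ4 u) + φ₀ (sAut (projZ4 u)), fun u v => ?_, fun u => ?_⟩
  · have hA := h₀' (projZ4 u) (projZ4 v)
    have hB := h₀' (sAut (projZ4 u)) (sAut (projZ4 v))
    rw [sAut_sAut, sAut_sAut] at hB
    show (φ₀ v + φ₀ (projZ4 v) + φ₀ (sAut (projZ4 v)))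
        - (φ₀ (u * v) + φ₀ (projZ4 (u * v)) + φ₀ (sAut (projZ4 (u * v))))
        + (φ₀ u + φ₀ (projZ4 u) + φ₀ (sAut (projZ4 u)))
        = cVal c (sAut u, sAut v) - cVal c (u, v)
    rw [projZ4_mul u v, map_mul]
    linear_combination h₀' u v + hA + hB
  · have e1 : projZ4 u * sAut (projZ4 (sAut u)) = u := proj_decomp u
    have e2 : sAut (projZ4 u) * projZ4 (sAut u) = sAut u := by
      have := congrArg sAut e1
      rwa [map_mul, sAut_sAut] at this
    have hC := h₀' (projZ4 u) (sAut (projZ4 (sAut u)))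
    rw [e1, sAut_sAut] at hC
    have hD := h₀' (sAut (projZ4 u)) (projZ4 (sAut u))
    rw [e2, sAut_sAut] at hD
    show φ₀ (sAut u) + φ₀ (projZ4 (sAut u)) + φ₀ (sAut (projZ4 (sAut u)))
        = φ₀ u + φ₀ (projZ4 u) + φ₀ (sAut (projZ4 u))
    linear_combination hC + hD +
      (φ₀ (sAut u) - φ₀ (projZ4 u) - φ₀ (sAut (projZ4 u))) * z2_two

end Test5
section Test6
open SemidirectProduct

lemma exists_extension (c : cocycles₂ (Rep.trivial (ZMod 2) Z4 (ZMod 2)))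
    (φ : Z4 → ZMod 2)
    (hdφ : ∀ u v : Z4, φ v - φ (u * v) + φ u = cVal c (sAut u, sAut v) - cVal c (u, v))
    (hφs : ∀ u : Z4, φ (sAut u) = φ u) :
    ∃ F : cocycles₂ (Rep.trivial (ZMod 2) Pi4 (ZMod 2)),
      twoCocyclesPullback (k := ZMod 2) (inl : Z4 →* Pi4) F = c := by
  have hc' : ∀ g h j : Z4, cVal c (g * h, j) + cVal c (g, h)
      = cVal c (h, j) + cVal c (g, h * j) := fun g h j => by
    have := (mem_cocycles₂_iff (c : Z4 × Z4 → _)).1 c.2 g h j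
    simpa only [Representation.isTrivial_apply, cVal] using this
  have htt : tauC * tauC = (1 : C₂) := by decide
  have hF : (fun p : Pi4 × Pi4 =>
      cVal c (p.1.left, actC₂ p.1.right p.2.left) + eC p.1.right * φ p.2.left)
      ∈ cocycles₂ (Rep.trivial (ZMod 2) Pi4 (ZMod 2)) := by
    rw [mem_cocycles₂_iff]
    intro g h j
    simp only [Representation.isTrivial_apply, SemidirectProduct.mul_left, SemidirectProduct.mul_right]
    show (_ : ZMod 2) = _
    rcases C2_cases g.right with ha | ha
    · simp only [ha, one_mul, actC₂_one, MulAut.one_apply, eC_one, zero_mul, add_zero]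
      linear_combination hc' g.left h.left (actC₂ h.right j.left)
    · rcases C2_cases h.right with hb | hb
      · simp only [ha, hb, mul_one, actC₂_tau, actC₂_one, MulAut.one_apply, eC_tau, eC_one,
          one_mul, zero_mul, add_zero]
        rw [map_mul]
        have h2 := hdφ h.left j.left
        linear_combination hc' g.left (sAut h.left) (sAut j.left) + h2 +
          (cVal c (sAut h.left, sAut j.left) - cVal c (h.left, j.left)) * z2_two
      · simp only [ha, hb, htt, actC₂_one, actC₂_tau, MulAut.one_apply, eC_one, eC_tau,
          one_mul, zero_mul, add_zero, zero_add]
        rw [map_mul, sAut_sAut]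
        have h2 := hdφ h.left (sAut j.left)
        rw [sAut_sAut] at h2
        have h3 := hφs j.left
        linear_combination hc' g.left (sAut h.left) j.left + h2 - h3 +
          (cVal c (sAut h.left, j.left) - cVal c (h.left, sAut j.left) - φ j.left) * z2_two
  refine ⟨⟨_, hF⟩, ?_⟩
  ext u v
  show cVal c ((inl u : Pi4).left, actC₂ (inl u : Pi4).right (inl v : Pi4).left)
      + eC (inl u : Pi4).right * φ (inl v : Pi4).left = cVal c (u, v)
  simp only [left_inl, right_inl, actC₂_one, MulAut.one_apply, eC_one, zero_mul, add_zero]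

end Test6

/-- For `π = ℤ⁴ ⋊ C₂` (with the nontrivial element of `C₂` acting on `ℤ⁴` by
`s : (a₁,a₂,a₃,a₄) ↦ (a₃,a₄,a₁,a₂)`), and `j : ℤ⁴ → π` the inclusion of the normal subgroup,
the image of the restriction map `j* : H²(π; 𝔽₂) → H²(ℤ⁴; 𝔽₂)` on group cohomology with
trivial coefficients `𝔽₂ = ℤ/2` is exactly the subgroup of classes fixed by the
automorphism `s*` of `H²(ℤ⁴; 𝔽₂)` induced functorially by `s`. -/
theorem stmt11 :
    Set.range (H2TrivPullback (k := ZMod 2) (SemidirectProduct.inl : Z4 →* Pi4)) =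
      {x : H2Quot (Rep.trivial (ZMod 2) Z4 (ZMod 2)) |
        H2TrivPullback (k := ZMod 2) sAut.toMonoidHom x = x} := by
  ext x
  simp only [Set.mem_range, Set.mem_setOf_eq]
  constructor
  · rintro ⟨y, rfl⟩
    obtain ⟨c', rfl⟩ := Submodule.Quotient.mk_surjective _ y
    simp only [H2TrivPullback, Submodule.mapQ_apply]
    exact (Submodule.Quotient.eq _).2 (range_subset_fixed c')
  · intro hx
    obtain ⟨c, rfl⟩ := Submodule.Quotient.mk_surjective _ x
    simp only [H2TrivPullback, Submodule.mapQ_apply] at hx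
    have hcb := (Submodule.Quotient.eq _).1 hx
    obtain ⟨φ, hdφ, hφs⟩ := exists_phi c hcb
    obtain ⟨F, hFc⟩ := exists_extension c φ hdφ hφs
    exact ⟨Submodule.Quotient.mk F, by
      simp only [H2TrivPullback, Submodule.mapQ_apply, hFc]⟩

end Example
end
end
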